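/- arXiv:1911.01882 — 3 statements merged into one kernel-verified Lean document; each statement's English description precedes it below -/
import Mathlib

section
/- Let γ : ℝ → U be a smooth, injective, proper curve with g-unit speed (γ̇(s)ᵀ g(γ(s)) γ̇(s) = 1 for all s ∈ ℝ) and image C = γ(ℝ). Then C is a strict normal mode of the dynamics Dq̇ = ∇f(q) if and only if (a) γ is a geodesic, i.e. (Dγ̇)(s) = 0 for all s ∈ ℝ, and (b) for every s ∈ ℝ the gradient ∇f(γ(s)) lies in the span of γ̇(s). -/
open Matrix

/-- Partial derivative in direction `i` of a scalar function on `ℝⁿ`. -/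
noncomputable def pd {n : ℕ} (i : Fin n) (h : (Fin n → ℝ) → ℝ) (x : Fin n → ℝ) : ℝ :=
  fderiv ℝ h x (Pi.single i 1)

/-- Christoffel symbols `Γᵏᵢⱼ` of the Levi-Civita connection of the metric `g`
in local coordinates. -/
noncomputable def christoffel {n : ℕ} (g : (Fin n → ℝ) → Matrix (Fin n) (Fin n) ℝ)
    (k i j : Fin n) (x : Fin n → ℝ) : ℝ :=
  (1 / 2) * ∑ l, (g x)⁻¹ k l *
    (pd i (fun y => g y j l) x + pd j (fun y => g y i l) x - pd l (fun y => g y i j) x)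

/-- Covariant acceleration `(Dq̇)ᵏ(t) = q̈ᵏ(t) + Σᵢⱼ Γᵏᵢⱼ(q(t)) q̇ⁱ(t) q̇ʲ(t)` of a curve. -/
noncomputable def covAccel {n : ℕ} (g : (Fin n → ℝ) → Matrix (Fin n) (Fin n) ℝ)
    (q : ℝ → Fin n → ℝ) (t : ℝ) : Fin n → ℝ :=
  fun k => deriv (deriv q) t k +
    ∑ i, ∑ j, christoffel g k i j (q t) * deriv q t i * deriv q t j

/-- The `g`-gradient `(∇f)ᵏ(x) = Σⱼ (g(x)⁻¹)ᵏʲ ∂ⱼf(x)` of a scalar function `f`. -/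
noncomputable def gGrad {n : ℕ} (g : (Fin n → ℝ) → Matrix (Fin n) (Fin n) ℝ)
    (f : (Fin n → ℝ) → ℝ) (x : Fin n → ℝ) : Fin n → ℝ :=
  fun k => ∑ j, (g x)⁻¹ k j * pd j f x

/-- `q` is a `C²` solution of the dynamics `Dq̇ = ∇f(q)` on the set `I`, staying in `U`. -/
def IsSolutionOn {n : ℕ} (g : (Fin n → ℝ) → Matrix (Fin n) (Fin n) ℝ)
    (f : (Fin n → ℝ) → ℝ) (U : Set (Fin n → ℝ)) (q : ℝ → Fin n → ℝ) (I : Set ℝ) : Prop :=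
  ContDiffOn ℝ 2 q I ∧ (∀ t ∈ I, q t ∈ U) ∧ ∀ t ∈ I, covAccel g q t = gGrad g f (q t)

/-- The tangent bundle `TC = {(γ(s), v·γ̇(s)) : s, v ∈ ℝ}` of the curve `C = γ(ℝ)`. -/
def TangentBundleOf {n : ℕ} (γ : ℝ → Fin n → ℝ) : Set ((Fin n → ℝ) × (Fin n → ℝ)) :=
  {p | ∃ s v : ℝ, p.1 = γ s ∧ p.2 = v • deriv γ s}

/-- `C = γ(ℝ)` is a strict normal mode of the dynamics `Dq̇ = ∇f(q)`: its tangent bundle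
is an invariant set, i.e. every `C²` solution starting (at some time `t₀` of its open
interval of definition) on the tangent bundle of the curve remains on it. -/
def IsStrictNormalMode {n : ℕ} (g : (Fin n → ℝ) → Matrix (Fin n) (Fin n) ℝ)
    (f : (Fin n → ℝ) → ℝ) (U : Set (Fin n → ℝ)) (γ : ℝ → Fin n → ℝ) : Prop :=
  ∀ I : Set ℝ, IsOpen I → I.OrdConnected → ∀ q : ℝ → Fin n → ℝ, IsSolutionOn g f U q I →
    ∀ t₀ ∈ I, (q t₀, deriv q t₀) ∈ TangentBundleOf γ →
      ∀ t ∈ I, (q t, deriv q t) ∈ TangentBundleOf γ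

open Set Filter Topology

section A
variable {n : ℕ} {U : Set (Fin n → ℝ)}

lemma contDiffOn_pd (hU : IsOpen U) {h : (Fin n → ℝ) → ℝ}
    (hh : ContDiffOn ℝ (⊤:ℕ∞) h U) (i : Fin n) :
    ContDiffOn ℝ (⊤:ℕ∞) (pd i h) U := by
  have h1 : ContDiffOn ℝ (⊤:ℕ∞) (fderiv ℝ h) U :=
    hh.fderiv_of_isOpen hU (by exact_mod_cast le_top)
  exact h1.clm_apply contDiffOn_const

lemma contDiffOn_det {m : ℕ} {M : (Fin n → ℝ) → Matrix (Fin m) (Fin m) ℝ}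
    (hM : ∀ i j, ContDiffOn ℝ (⊤:ℕ∞) (fun x => M x i j) U) :
    ContDiffOn ℝ (⊤:ℕ∞) (fun x => (M x).det) U := by
  simp only [Matrix.det_apply']
  exact ContDiffOn.sum fun σ _ =>
    ContDiffOn.mul contDiffOn_const (contDiffOn_prod fun i _ => hM (σ i) i)

lemma contDiffOn_inv_entry {g : (Fin n → ℝ) → Matrix (Fin n) (Fin n) ℝ}
    (hg : ∀ i j, ContDiffOn ℝ (⊤:ℕ∞) (fun x => g x i j) U)
    (hdet : ∀ x ∈ U, (g x).det ≠ 0) (k l : Fin n) :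
    ContDiffOn ℝ (⊤:ℕ∞) (fun x => (g x)⁻¹ k l) U := by
  have key : ∀ x, (g x)⁻¹ k l = ((g x).det)⁻¹ * (g x).adjugate k l := by
    intro x
    rw [Matrix.inv_def, Matrix.smul_apply, Ring.inverse_eq_inv', smul_eq_mul]
  simp only [key]
  apply ContDiffOn.mul ((contDiffOn_det hg).inv hdet)
  have : ∀ i j, ContDiffOn ℝ (⊤:ℕ∞)
      (fun x => (g x).updateRow l (Pi.single k 1) i j) U := by
    intro i j
    rcases eq_or_ne i l with h | h
    · have : (fun x => (g x).updateRow l (Pi.single k 1) i j)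
          = fun _ : Fin n → ℝ => ((Pi.single k 1 : Fin n → ℝ) j) := by
        funext x; simp [Matrix.updateRow_apply, h]
      rw [this]; exact contDiffOn_const
    · simpa [Matrix.updateRow_apply, h] using hg i j
  simpa only [Matrix.adjugate_apply] using contDiffOn_det this

lemma contDiffOn_christoffel (hU : IsOpen U)
    {g : (Fin n → ℝ) → Matrix (Fin n) (Fin n) ℝ}
    (hg : ∀ i j, ContDiffOn ℝ (⊤:ℕ∞) (fun x => g x i j) U)
    (hdet : ∀ x ∈ U, (g x).det ≠ 0) (k i j : Fin n) :
    ContDiffOn ℝ (⊤:ℕ∞) (christoffel g k i j) U := by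
  unfold christoffel
  apply ContDiffOn.mul contDiffOn_const
  apply ContDiffOn.sum
  intro l _
  exact (contDiffOn_inv_entry hg hdet k l).mul
    (((contDiffOn_pd hU (hg j l) i).add (contDiffOn_pd hU (hg i l) j)).sub
      (contDiffOn_pd hU (hg i j) l))

lemma contDiffOn_gGrad (hU : IsOpen U)
    {g : (Fin n → ℝ) → Matrix (Fin n) (Fin n) ℝ}
    (hg : ∀ i j, ContDiffOn ℝ (⊤:ℕ∞) (fun x => g x i j) U)
    (hdet : ∀ x ∈ U, (g x).det ≠ 0)
    {f : (Fin n → ℝ) → ℝ} (hf : ContDiffOn ℝ (⊤:ℕ∞) f U) (k : Fin n) :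
    ContDiffOn ℝ (⊤:ℕ∞) (fun x => gGrad g f x k) U := by
  unfold gGrad
  exact ContDiffOn.sum fun j _ =>
    (contDiffOn_inv_entry hg hdet k j).mul (contDiffOn_pd hU hf j)

end A

section B
variable {n : ℕ}


/-- second derivative data from C² at a point -/
lemma c2_at_deriv {E : Type*} [NormedAddCommGroup E] [NormedSpace ℝ E]
    {q : ℝ → E} {t₀ : ℝ} (h : ContDiffAt ℝ 2 q t₀) :
    (∀ᶠ t in 𝓝 t₀, HasDerivAt q (deriv q t) t) ∧
      HasDerivAt (deriv q) (deriv (deriv q) t₀) t₀ := by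
  obtain ⟨u, hu, hcd⟩ := h.contDiffOn (m := 2) le_rfl (by norm_num)
  obtain ⟨v, hvu, hvo, hv⟩ := mem_nhds_iff.mp hu
  have hcd' : ContDiffOn ℝ 2 q v := hcd.mono hvu
  have h2 : (2 : WithTop ℕ∞) = 1 + 1 := by norm_num
  rw [h2, contDiffOn_succ_iff_deriv_of_isOpen hvo] at hcd'
  have hev : ∀ᶠ t in 𝓝 t₀, HasDerivAt q (deriv q t) t := by
    filter_upwards [hvo.mem_nhds hv] with t ht
    exact ((hcd'.1 t ht).differentiableAt (hvo.mem_nhds ht)).hasDerivAt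
  refine ⟨hev, ?_⟩
  have := (hcd'.2.2.differentiableOn (by norm_num) t₀ hv).differentiableAt (hvo.mem_nhds hv)
  exact this.hasDerivAt

lemma c2_on_open {E : Type*} [NormedAddCommGroup E] [NormedSpace ℝ E]
    {q : ℝ → E} {I : Set ℝ} (hI : IsOpen I) (hq : ContDiffOn ℝ 2 q I)
    {t : ℝ} (ht : t ∈ I) :
    ContDiffAt ℝ 2 q t :=
  hq.contDiffAt (hI.mem_nhds ht)

end B


section C
variable {n : ℕ}

lemma sum_sum_scale (F : Fin n → Fin n → ℝ) (c : ℝ) (w : Fin n → ℝ) :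
    ∑ i, ∑ j, F i j * (c * w i) * (c * w j) = c^2 * ∑ i, ∑ j, F i j * w i * w j := by
  rw [Finset.mul_sum]
  refine Finset.sum_congr rfl fun i _ => ?_
  rw [Finset.mul_sum]
  refine Finset.sum_congr rfl fun j _ => ?_
  ring

lemma covAccel_congr (g : (Fin n → ℝ) → Matrix (Fin n) (Fin n) ℝ)
    {q r : ℝ → Fin n → ℝ} {t : ℝ} (h : q =ᶠ[𝓝 t] r) :
    covAccel g q t = covAccel g r t := by
  have hd : deriv q =ᶠ[𝓝 t] deriv r := h.deriv
  have hdd : deriv (deriv q) t = deriv (deriv r) t := hd.deriv.self_of_nhds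
  have hdt : deriv q t = deriv r t := hd.self_of_nhds
  unfold covAccel
  rw [hdd, hdt, h.self_of_nhds]

/-- Covariant acceleration of a reparametrized curve. -/
lemma covAccel_comp (g : (Fin n → ℝ) → Matrix (Fin n) (Fin n) ℝ)
    {γ : ℝ → Fin n → ℝ} (hγ : ContDiff ℝ (⊤:ℕ∞) γ)
    {σ σ₁ : ℝ → ℝ} {t₀ a : ℝ}
    (h1 : ∀ᶠ t in 𝓝 t₀, HasDerivAt σ (σ₁ t) t)
    (h2 : HasDerivAt σ₁ a t₀) :
    deriv (fun u => γ (σ u)) t₀ = σ₁ t₀ • deriv γ (σ t₀) ∧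
    covAccel g (fun u => γ (σ u)) t₀
      = a • deriv γ (σ t₀) + (σ₁ t₀)^2 • covAccel g γ (σ t₀) := by
  have hγd : Differentiable ℝ γ := hγ.differentiable (by simp)
  have hγ' : ContDiff ℝ (⊤:ℕ∞) (deriv γ) := (contDiff_infty_iff_deriv.mp hγ).2
  have hγ'd : Differentiable ℝ (deriv γ) := hγ'.differentiable (by simp)
  -- first derivative, eventually
  have hq' : ∀ᶠ t in 𝓝 t₀, HasDerivAt (fun u => γ (σ u)) (σ₁ t • deriv γ (σ t)) t := by
    filter_upwards [h1] with t ht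
    exact ((hγd (σ t)).hasDerivAt).scomp t ht
  have hderiv_eq : deriv (fun u => γ (σ u)) =ᶠ[𝓝 t₀] fun t => σ₁ t • deriv γ (σ t) := by
    filter_upwards [hq'] with t ht using ht.deriv
  refine ⟨hderiv_eq.self_of_nhds, ?_⟩
  -- second derivative
  have hd2 : HasDerivAt (fun t => σ₁ t • deriv γ (σ t))
      (σ₁ t₀ • (σ₁ t₀ • deriv (deriv γ) (σ t₀)) + a • deriv γ (σ t₀)) t₀ := by
    have hinner : HasDerivAt (fun t => deriv γ (σ t)) (σ₁ t₀ • deriv (deriv γ) (σ t₀)) t₀ :=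
      ((hγ'd (σ t₀)).hasDerivAt).scomp t₀ h1.self_of_nhds
    exact h2.smul hinner
  have hdd : deriv (deriv (fun u => γ (σ u))) t₀
      = σ₁ t₀ • (σ₁ t₀ • deriv (deriv γ) (σ t₀)) + a • deriv γ (σ t₀) := by
    rw [hderiv_eq.deriv_eq]
    exact hd2.deriv
  funext k
  unfold covAccel
  rw [hdd, hderiv_eq.self_of_nhds]
  simp only [Pi.add_apply, Pi.smul_apply, smul_eq_mul]
  have := sum_sum_scale (fun i j => christoffel g k i j (γ (σ t₀))) (σ₁ t₀) (deriv γ (σ t₀))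
  rw [this]
  ring
end C

lemma fderiv_apply_eq_sum_pd {n : ℕ} {h : (Fin n → ℝ) → ℝ} {x w : Fin n → ℝ} :
    fderiv ℝ h x w = ∑ l, w l * pd l h x := by
  have hw : w = ∑ l, w l • (Pi.single l 1 : Fin n → ℝ) := by
    funext j
    simp [Pi.single_apply, Finset.sum_apply]
  conv_lhs => rw [hw]
  rw [map_sum]
  refine Finset.sum_congr rfl fun l _ => ?_
  rw [_root_.map_smul]
  rfl

lemma dot_mulVec_expand {n : ℕ} (M : Matrix (Fin n) (Fin n) ℝ) (u v : Fin n → ℝ) :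
    u ⬝ᵥ M *ᵥ v = ∑ i, ∑ j, M i j * u i * v j := by
  simp only [dotProduct, mulVec]
  refine Finset.sum_congr rfl fun i _ => ?_
  rw [Finset.mul_sum]
  exact Finset.sum_congr rfl fun j _ => by ring

section D
variable {n : ℕ} {U : Set (Fin n → ℝ)} {g : (Fin n → ℝ) → Matrix (Fin n) (Fin n) ℝ}
  {γ : ℝ → Fin n → ℝ}

/-- lowering an index of the Christoffel symbols -/
lemma sum_g_christoffel {x : Fin n → ℝ} (hsymm : (g x).IsSymm) (hdet : IsUnit (g x).det)
    (m i j : Fin n) :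
    ∑ k, g x k m * christoffel g k i j x
      = (1/2) * (pd i (fun y => g y j m) x + pd j (fun y => g y i m) x
          - pd m (fun y => g y i j) x) := by
  unfold christoffel
  set A : Fin n → ℝ := fun l => pd i (fun y => g y j l) x + pd j (fun y => g y i l) x
      - pd l (fun y => g y i j) x with hA
  have key : ∀ l, ∑ k, g x k m * ((g x)⁻¹ k l) = if m = l then 1 else 0 := by
    intro l
    have h1 : (g x * (g x)⁻¹) m l = (1 : Matrix (Fin n) (Fin n) ℝ) m l := by
      rw [Matrix.mul_nonsing_inv _ hdet]
    rw [Matrix.mul_apply] at h1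
    calc ∑ k, g x k m * (g x)⁻¹ k l = ∑ k, g x m k * (g x)⁻¹ k l :=
          Finset.sum_congr rfl fun k _ => by rw [(hsymm.apply k m).symm]
      _ = if m = l then 1 else 0 := by rw [h1]; simp [Matrix.one_apply]
  calc ∑ k, g x k m * ((1/2) * ∑ l, (g x)⁻¹ k l * A l)
      = ∑ k, ∑ l, (1/2) * (g x k m * (g x)⁻¹ k l * A l) := by
        refine Finset.sum_congr rfl fun k _ => ?_
        rw [Finset.mul_sum, Finset.mul_sum]
        exact Finset.sum_congr rfl fun l _ => by ring
    _ = ∑ l, ∑ k, (1/2) * (g x k m * (g x)⁻¹ k l * A l) := Finset.sum_comm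
    _ = ∑ l, (1/2) * ((∑ k, g x k m * (g x)⁻¹ k l) * A l) := by
        refine Finset.sum_congr rfl fun l _ => ?_
        rw [Finset.sum_mul, Finset.mul_sum]
    _ = ∑ l, (1/2) * ((if m = l then 1 else 0) * A l) := by
        refine Finset.sum_congr rfl fun l _ => by rw [key l]
    _ = (1/2) * A m := by
        rw [← Finset.mul_sum]
        congr 1
        simp [Finset.sum_ite_eq]

/-- `g`-orthogonality of the covariant acceleration to the velocity, for a unit-speed curve. -/
lemma covAccel_dot_self (hUopen : IsOpen U)
    (hg : ∀ i j, ContDiffOn ℝ (⊤:ℕ∞) (fun x => g x i j) U)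
    (hgsymm : ∀ x ∈ U, (g x).IsSymm)
    (hdet : ∀ x ∈ U, IsUnit (g x).det)
    (hγ : ContDiff ℝ (⊤:ℕ∞) γ) (hγU : ∀ s, γ s ∈ U)
    (hγunit : ∀ s : ℝ, deriv γ s ⬝ᵥ (g (γ s)) *ᵥ deriv γ s = 1) (s : ℝ) :
    covAccel g γ s ⬝ᵥ (g (γ s) *ᵥ deriv γ s) = 0 := by
  have hγd : Differentiable ℝ γ := hγ.differentiable (by simp)
  have hγ' : ContDiff ℝ (⊤:ℕ∞) (deriv γ) := (contDiff_infty_iff_deriv.mp hγ).2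
  have hγ'd : Differentiable ℝ (deriv γ) := hγ'.differentiable (by simp)
  set x := γ s with hx
  set w : Fin n → ℝ := deriv γ s with hwdef
  set w2 : Fin n → ℝ := deriv (deriv γ) s with hw2def
  -- the canonical cubic sum
  set SS : ℝ := ∑ a, ∑ b, ∑ c, pd a (fun y => g y b c) x * (w a * (w b * w c)) with hSS
  set T : ℝ := ∑ i, ∑ j, g x i j * (w2 i * w j) with hT
  -- Step 1: derivative of the constant speed
  have hgdiff : ∀ i j, DifferentiableAt ℝ (fun y => g y i j) x :=
    fun i j => ((hg i j).differentiableOn (by simp)).differentiableAt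
      (hUopen.mem_nhds (hγU s))
  have hterm : ∀ i j : Fin n, HasDerivAt (fun u => g (γ u) i j * (deriv γ u i * deriv γ u j))
      ((∑ l, w l * pd l (fun y => g y i j) x) * (w i * w j)
        + g x i j * (w2 i * w j + w i * w2 j)) s := by
    intro i j
    have hA : HasDerivAt (fun u => g (γ u) i j) (∑ l, w l * pd l (fun y => g y i j) x) s := by
      have := ((hgdiff i j).hasFDerivAt).comp_hasDerivAt s ((hγd s).hasDerivAt)
      rwa [fderiv_apply_eq_sum_pd] at this
    have hB : HasDerivAt (fun u => deriv γ u i) (w2 i) s :=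
      hasDerivAt_pi.mp ((hγ'd s).hasDerivAt) i
    have hC : HasDerivAt (fun u => deriv γ u j) (w2 j) s :=
      hasDerivAt_pi.mp ((hγ'd s).hasDerivAt) j
    have := hA.fun_mul (hB.fun_mul hC)
    convert this using 1
    try ring
  have hφ : HasDerivAt (fun u => ∑ i, ∑ j, g (γ u) i j * (deriv γ u i * deriv γ u j))
      (∑ i, ∑ j, ((∑ l, w l * pd l (fun y => g y i j) x) * (w i * w j)
        + g x i j * (w2 i * w j + w i * w2 j))) s := by
    apply HasDerivAt.fun_sum
    intro i _
    exact HasDerivAt.fun_sum fun j _ => hterm i j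
  have hconst : (fun u => ∑ i, ∑ j, g (γ u) i j * (deriv γ u i * deriv γ u j))
      = fun _ => (1:ℝ) := by
    funext u
    have := hγunit u
    rw [dot_mulVec_expand] at this
    rw [← this]
    exact Finset.sum_congr rfl fun i _ => Finset.sum_congr rfl fun j _ => by ring
  have hzero : (∑ i, ∑ j, ((∑ l, w l * pd l (fun y => g y i j) x) * (w i * w j)
      + g x i j * (w2 i * w j + w i * w2 j))) = 0 := by
    have h0 : HasDerivAt (fun _ : ℝ => (1:ℝ)) 0 s := hasDerivAt_const s 1
    have := hφ
    rw [hconst] at this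
    exact this.unique h0
  -- massage hzero into SS + 2 * T = 0
  have hsplit : SS + 2 * T = 0 := by
    have e1 : (∑ i, ∑ j, ((∑ l, w l * pd l (fun y => g y i j) x) * (w i * w j)
        + g x i j * (w2 i * w j + w i * w2 j)))
        = (∑ i, ∑ j, (∑ l, pd l (fun y => g y i j) x * (w l * (w i * w j))))
          + (∑ i, ∑ j, g x i j * (w2 i * w j)) + (∑ i, ∑ j, g x i j * (w i * w2 j)) := by
      rw [← Finset.sum_add_distrib, ← Finset.sum_add_distrib]
      refine Finset.sum_congr rfl fun i _ => ?_
      rw [← Finset.sum_add_distrib, ← Finset.sum_add_distrib]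
      refine Finset.sum_congr rfl fun j _ => ?_
      rw [Finset.sum_mul]
      have : ∀ l ∈ Finset.univ, w l * pd l (fun y => g y i j) x * (w i * w j)
          = pd l (fun y => g y i j) x * (w l * (w i * w j)) := fun l _ => by ring
      rw [Finset.sum_congr rfl this]
      ring
    have e2 : (∑ i, ∑ j, (∑ l, pd l (fun y => g y i j) x * (w l * (w i * w j)))) = SS := by
      rw [hSS]
      rw [show (∑ a, ∑ b, ∑ c, pd a (fun y => g y b c) x * (w a * (w b * w c)))
          = ∑ b, ∑ a, ∑ c, pd a (fun y => g y b c) x * (w a * (w b * w c)) from Finset.sum_comm]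
      refine Finset.sum_congr rfl fun i _ => ?_
      rw [show (∑ a, ∑ c, pd a (fun y => g y i c) x * (w a * (w i * w c)))
          = ∑ c, ∑ a, pd a (fun y => g y i c) x * (w a * (w i * w c)) from Finset.sum_comm]
    have e3 : (∑ i, ∑ j, g x i j * (w i * w2 j)) = T := by
      rw [hT]
      rw [show (∑ i, ∑ j, g x i j * (w i * w2 j)) = ∑ j, ∑ i, g x i j * (w i * w2 j)
        from Finset.sum_comm]
      refine Finset.sum_congr rfl fun j _ => Finset.sum_congr rfl fun i _ => ?_
      rw [(hgsymm x (hγU s)).apply j i]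
      ring
    rw [e1, e2, e3, hT] at hzero
    rw [hSS, hT]
    linarith [hzero]
  -- expand the target
  have hexp : covAccel g γ s ⬝ᵥ (g x *ᵥ w) = ∑ k, ∑ m, g x k m
      * (w2 k + ∑ i, ∑ j, christoffel g k i j x * w i * w j) * w m := by
    rw [dot_mulVec_expand]
    rfl
  -- split into T plus the Christoffel part
  have hsplit2 : (∑ k, ∑ m, g x k m
        * (w2 k + ∑ i, ∑ j, christoffel g k i j x * w i * w j) * w m)
      = T + ∑ m, (∑ k, g x k m * (∑ i, ∑ j, christoffel g k i j x * w i * w j) * w m) := by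
    have e : ∀ k m, g x k m * (w2 k + ∑ i, ∑ j, christoffel g k i j x * w i * w j) * w m
        = g x k m * (w2 k * w m) + g x k m * (∑ i, ∑ j, christoffel g k i j x * w i * w j) * w m
        := fun k m => by ring
    calc (∑ k, ∑ m, g x k m * (w2 k + ∑ i, ∑ j, christoffel g k i j x * w i * w j) * w m)
        = ∑ k, (∑ m, g x k m * (w2 k * w m)
            + ∑ m, g x k m * (∑ i, ∑ j, christoffel g k i j x * w i * w j) * w m) := by
          refine Finset.sum_congr rfl fun k _ => ?_
          rw [← Finset.sum_add_distrib]
          exact Finset.sum_congr rfl fun m _ => e k m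
      _ = (∑ k, ∑ m, g x k m * (w2 k * w m))
            + ∑ k, ∑ m, g x k m * (∑ i, ∑ j, christoffel g k i j x * w i * w j) * w m :=
          Finset.sum_add_distrib
      _ = T + ∑ m, ∑ k, g x k m * (∑ i, ∑ j, christoffel g k i j x * w i * w j) * w m :=
          congrArg₂ (· + ·) rfl Finset.sum_comm
  -- identify the Christoffel part with the cubic sums
  have hchrist : ∀ m, (∑ k, g x k m * (∑ i, ∑ j, christoffel g k i j x * w i * w j) * w m)
      = ∑ i, ∑ j, (1/2) * ((pd i (fun y => g y j m) x + pd j (fun y => g y i m) x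
          - pd m (fun y => g y i j) x) * (w i * (w j * w m))) := by
    intro m
    have e1 : (∑ k, g x k m * (∑ i, ∑ j, christoffel g k i j x * w i * w j) * w m)
        = ∑ k, ∑ i, ∑ j, g x k m * christoffel g k i j x * (w i * (w j * w m)) := by
      refine Finset.sum_congr rfl fun k _ => ?_
      rw [Finset.mul_sum, Finset.sum_mul]
      refine Finset.sum_congr rfl fun i _ => ?_
      rw [Finset.mul_sum, Finset.sum_mul]
      exact Finset.sum_congr rfl fun j _ => by ring
    rw [e1, Finset.sum_comm]
    refine Finset.sum_congr rfl fun i _ => ?_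
    rw [Finset.sum_comm]
    refine Finset.sum_congr rfl fun j _ => ?_
    have e2 : (∑ k, g x k m * christoffel g k i j x * (w i * (w j * w m)))
        = (∑ k, g x k m * christoffel g k i j x) * (w i * (w j * w m)) := by
      rw [Finset.sum_mul]
    rw [e2, sum_g_christoffel (hgsymm x (hγU s)) (hdet x (hγU s)) m i j]
    ring
  -- the three cubic sums all equal SS
  have cub1 : (∑ m, ∑ i, ∑ j, pd i (fun y => g y j m) x * (w i * (w j * w m))) = SS := by
    rw [hSS]
    rw [show (∑ m, ∑ i, ∑ j, pd i (fun y => g y j m) x * (w i * (w j * w m)))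
      = ∑ i, ∑ m, ∑ j, pd i (fun y => g y j m) x * (w i * (w j * w m)) from Finset.sum_comm]
    refine Finset.sum_congr rfl fun a _ => ?_
    rw [show (∑ m, ∑ j, pd a (fun y => g y j m) x * (w a * (w j * w m)))
      = ∑ j, ∑ m, pd a (fun y => g y j m) x * (w a * (w j * w m)) from Finset.sum_comm]
  have cub2 : (∑ m, ∑ i, ∑ j, pd j (fun y => g y i m) x * (w i * (w j * w m))) = SS := by
    rw [hSS]
    rw [show (∑ m, ∑ i, ∑ j, pd j (fun y => g y i m) x * (w i * (w j * w m)))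
      = ∑ i, ∑ m, ∑ j, pd j (fun y => g y i m) x * (w i * (w j * w m)) from Finset.sum_comm]
    rw [show (∑ i, ∑ m, ∑ j, pd j (fun y => g y i m) x * (w i * (w j * w m)))
      = ∑ i, ∑ j, ∑ m, pd j (fun y => g y i m) x * (w i * (w j * w m)) from
        Finset.sum_congr rfl fun i _ => Finset.sum_comm]
    rw [show (∑ i, ∑ j, ∑ m, pd j (fun y => g y i m) x * (w i * (w j * w m)))
      = ∑ j, ∑ i, ∑ m, pd j (fun y => g y i m) x * (w i * (w j * w m)) from Finset.sum_comm]
    exact Finset.sum_congr rfl fun a _ => Finset.sum_congr rfl fun b _ =>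
      Finset.sum_congr rfl fun c _ => by ring
  have cub3 : (∑ m, ∑ i, ∑ j, pd m (fun y => g y i j) x * (w i * (w j * w m))) = SS := by
    rw [hSS]
    exact Finset.sum_congr rfl fun a _ => Finset.sum_congr rfl fun b _ =>
      Finset.sum_congr rfl fun c _ => by ring
  -- assemble
  have hfinal : (∑ m, (∑ k, g x k m * (∑ i, ∑ j, christoffel g k i j x * w i * w j) * w m))
      = (1/2) * SS := by
    calc (∑ m, (∑ k, g x k m * (∑ i, ∑ j, christoffel g k i j x * w i * w j) * w m))
        = ∑ m, ∑ i, ∑ j, (1/2) * ((pd i (fun y => g y j m) x + pd j (fun y => g y i m) x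
            - pd m (fun y => g y i j) x) * (w i * (w j * w m))) :=
          Finset.sum_congr rfl fun m _ => hchrist m
      _ = ∑ m, ∑ i, ∑ j, ((1/2) * (pd i (fun y => g y j m) x * (w i * (w j * w m)))
            + (1/2) * (pd j (fun y => g y i m) x * (w i * (w j * w m)))
            - (1/2) * (pd m (fun y => g y i j) x * (w i * (w j * w m)))) :=
          Finset.sum_congr rfl fun m _ => Finset.sum_congr rfl fun i _ =>
            Finset.sum_congr rfl fun j _ => by ring
      _ = (1/2) * (∑ m, ∑ i, ∑ j, pd i (fun y => g y j m) x * (w i * (w j * w m)))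
            + (1/2) * (∑ m, ∑ i, ∑ j, pd j (fun y => g y i m) x * (w i * (w j * w m)))
            - (1/2) * (∑ m, ∑ i, ∑ j, pd m (fun y => g y i j) x * (w i * (w j * w m))) := by
          simp only [Finset.sum_sub_distrib, Finset.sum_add_distrib, ← Finset.mul_sum]
      _ = (1/2) * SS + (1/2) * SS - (1/2) * SS := by rw [cub1, cub2, cub3]
      _ = (1/2) * SS := by ring
  rw [hexp, hsplit2, hfinal]
  linarith [hsplit]
end D

section E
variable {n : ℕ} {g : (Fin n → ℝ) → Matrix (Fin n) (Fin n) ℝ} {γ : ℝ → Fin n → ℝ}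

lemma deriv_ne_zero (hγunit : ∀ s : ℝ, deriv γ s ⬝ᵥ (g (γ s)) *ᵥ deriv γ s = 1) (s : ℝ) :
    deriv γ s ≠ 0 := by
  intro h
  have := hγunit s
  rw [h] at this
  simp at this

lemma smul_cancel {w : Fin n → ℝ} (hw : w ≠ 0) {a b : ℝ} (h : a • w = b • w) : a = b := by
  by_contra hab
  apply hw
  have : (a - b) • w = 0 := by rw [sub_smul, h, sub_self]
  simpa [sub_ne_zero.mpr hab] using smul_eq_zero.mp this

lemma tangentBundle_closed (hγsmooth : ContDiff ℝ (⊤:ℕ∞) γ)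
    (hγinj : Function.Injective γ) (hγproper : IsProperMap γ)
    (hγunit : ∀ s : ℝ, deriv γ s ⬝ᵥ (g (γ s)) *ᵥ deriv γ s = 1) :
    IsClosed (TangentBundleOf γ) := by
  have hemb : Topology.IsClosedEmbedding γ :=
    Topology.IsClosedEmbedding.of_continuous_injective_isClosedMap
      hγsmooth.continuous hγinj hγproper.isClosedMap
  have hγ' : Continuous (deriv γ) :=
    ((contDiff_infty_iff_deriv.mp hγsmooth).2).continuous
  apply IsSeqClosed.isClosed
  intro zk z hmem hlim
  choose sk vk h1 h2 using hmem
  have hfst : Tendsto (fun k => (zk k).1) atTop (𝓝 z.1) := (continuous_fst.tendsto z).comp hlim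
  have hsnd : Tendsto (fun k => (zk k).2) atTop (𝓝 z.2) := (continuous_snd.tendsto z).comp hlim
  have hx : z.1 ∈ Set.range γ := by
    refine hγproper.isClosed_range.mem_of_tendsto hfst ?_
    exact Eventually.of_forall fun k => by rw [h1 k]; exact ⟨sk k, rfl⟩
  obtain ⟨s, hs⟩ := hx
  have hsk : Tendsto sk atTop (𝓝 s) := by
    rw [hemb.isEmbedding.isInducing.tendsto_nhds_iff]
    have : (γ ∘ sk) = fun k => (zk k).1 := by funext k; exact (h1 k).symm
    rw [this, hs]
    exact hfst
  have hder : Tendsto (fun k => deriv γ (sk k)) atTop (𝓝 (deriv γ s)) :=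
    (hγ'.tendsto _).comp hsk
  obtain ⟨i0, hi0⟩ := Function.ne_iff.mp (deriv_ne_zero (g := g) hγunit s)
  have hdi : Tendsto (fun k => deriv γ (sk k) i0) atTop (𝓝 (deriv γ s i0)) :=
    ((continuous_apply i0).tendsto _).comp hder
  have hpi : Tendsto (fun k => (zk k).2 i0) atTop (𝓝 (z.2 i0)) :=
    ((continuous_apply i0).tendsto _).comp hsnd
  set v : ℝ := z.2 i0 / deriv γ s i0 with hv
  have hvk : Tendsto (fun k => (zk k).2 i0 / deriv γ (sk k) i0) atTop (𝓝 v) :=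
    hpi.div hdi (by simpa using hi0)
  have hev : ∀ᶠ k in atTop, (zk k).2 i0 / deriv γ (sk k) i0 = vk k := by
    have hne : ∀ᶠ k in atTop, deriv γ (sk k) i0 ≠ 0 :=
      hdi.eventually_ne (by simpa using hi0)
    filter_upwards [hne] with k hk
    rw [h2 k]
    simp [Pi.smul_apply, hk]
  have hvk' : Tendsto vk atTop (𝓝 v) := Tendsto.congr' hev hvk
  have hlim2 : Tendsto (fun k => vk k • deriv γ (sk k)) atTop (𝓝 (v • deriv γ s)) :=
    hvk'.smul hder
  have : Tendsto (fun k => (zk k).2) atTop (𝓝 (v • deriv γ s)) := by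
    refine hlim2.congr fun k => (h2 k).symm
  exact ⟨s, v, hs.symm, tendsto_nhds_unique hsnd this⟩

end E


section F
variable {n : ℕ} {U : Set (Fin n → ℝ)} {g : (Fin n → ℝ) → Matrix (Fin n) (Fin n) ℝ}
  {f : (Fin n → ℝ) → ℝ}

lemma HasDerivAt.fst' {E F : Type*} [NormedAddCommGroup E] [NormedSpace ℝ E]
    [NormedAddCommGroup F] [NormedSpace ℝ F] {y : ℝ → E × F} {Y : E × F} {t : ℝ}
    (h : HasDerivAt y Y t) : HasDerivAt (fun u => (y u).1) Y.1 t := by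
  simpa [Function.comp_def] using (ContinuousLinearMap.fst ℝ E F).hasFDerivAt.comp_hasDerivAt t h

lemma HasDerivAt.snd' {E F : Type*} [NormedAddCommGroup E] [NormedSpace ℝ E]
    [NormedAddCommGroup F] [NormedSpace ℝ F] {y : ℝ → E × F} {Y : E × F} {t : ℝ}
    (h : HasDerivAt y Y t) : HasDerivAt (fun u => (y u).2) Y.2 t := by
  simpa [Function.comp_def] using (ContinuousLinearMap.snd ℝ E F).hasFDerivAt.comp_hasDerivAt t h

/-- The first-order phase-space vector field of the dynamics. -/
noncomputable def phaseF (g : (Fin n → ℝ) → Matrix (Fin n) (Fin n) ℝ)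
    (f : (Fin n → ℝ) → ℝ) :
    ((Fin n → ℝ) × (Fin n → ℝ)) → ((Fin n → ℝ) × (Fin n → ℝ)) :=
  fun p => (p.2, fun k => gGrad g f p.1 k
    - ∑ i, ∑ j, christoffel g k i j p.1 * p.2 i * p.2 j)

lemma phaseF_contDiffOn (hUopen : IsOpen U)
    (hg : ∀ i j, ContDiffOn ℝ (⊤:ℕ∞) (fun x => g x i j) U)
    (hdet : ∀ x ∈ U, (g x).det ≠ 0) (hf : ContDiffOn ℝ (⊤:ℕ∞) f U) :
    ContDiffOn ℝ (⊤:ℕ∞) (phaseF g f) (U ×ˢ (univ : Set (Fin n → ℝ))) := by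
  apply ContDiffOn.prodMk
  · exact contDiff_snd.contDiffOn
  · rw [contDiffOn_pi]
    intro k
    apply ContDiffOn.sub
    · have := (contDiffOn_gGrad hUopen hg hdet hf k).comp
        (contDiff_fst.contDiffOn : ContDiffOn ℝ (⊤:ℕ∞) Prod.fst (U ×ˢ (univ : Set (Fin n → ℝ))))
        (fun p hp => hp.1)
      simpa [Function.comp_def] using this
    · apply ContDiffOn.sum; intro i _
      apply ContDiffOn.sum; intro j _
      refine ContDiffOn.mul (ContDiffOn.mul ?_ ?_) ?_
      · have := (contDiffOn_christoffel hUopen hg hdet k i j).comp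
          (contDiff_fst.contDiffOn : ContDiffOn ℝ (⊤:ℕ∞) Prod.fst (U ×ˢ (univ : Set (Fin n → ℝ))))
          (fun p hp => hp.1)
        simpa [Function.comp_def] using this
      · exact (contDiff_pi.mp contDiff_snd i).contDiffOn
      · exact (contDiff_pi.mp contDiff_snd j).contDiffOn

lemma phaseF_contDiffAt (hUopen : IsOpen U)
    (hg : ∀ i j, ContDiffOn ℝ (⊤:ℕ∞) (fun x => g x i j) U)
    (hdet : ∀ x ∈ U, (g x).det ≠ 0) (hf : ContDiffOn ℝ (⊤:ℕ∞) f U)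
    {z : (Fin n → ℝ) × (Fin n → ℝ)} (hz : z.1 ∈ U) :
    ContDiffAt ℝ 1 (phaseF g f) z := by
  have hmem : U ×ˢ (univ : Set (Fin n → ℝ)) ∈ 𝓝 z :=
    (hUopen.prod isOpen_univ).mem_nhds ⟨hz, trivial⟩
  exact ((phaseF_contDiffOn hUopen hg hdet hf).contDiffAt hmem).of_le (by exact_mod_cast le_top)

/-- a `C²` solution gives a phase-space ODE solution -/
lemma solution_phase {I : Set ℝ} {q : ℝ → Fin n → ℝ} (hI : IsOpen I)
    (hq2 : ContDiffOn ℝ 2 q I)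
    (heq : ∀ t ∈ I, covAccel g q t = gGrad g f (q t)) {t : ℝ} (ht : t ∈ I) :
    HasDerivAt (fun u => (q u, deriv q u)) (phaseF g f (q t, deriv q t)) t := by
  obtain ⟨hev, hdd⟩ := c2_at_deriv (c2_on_open hI hq2 ht)
  have h1 : HasDerivAt q (deriv q t) t := hev.self_of_nhds
  have h2 : deriv (deriv q) t = (phaseF g f (q t, deriv q t)).2 := by
    funext k
    have hk := congrFun (heq t ht) k
    simp only [covAccel] at hk
    show deriv (deriv q) t k = gGrad g f (q t) k
      - ∑ i, ∑ j, christoffel g k i j (q t) * deriv q t i * deriv q t j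
    linarith [hk]
  rw [h2] at hdd
  exact h1.prodMk hdd

/-- a phase-space ODE solution gives a `C²` solution of the dynamics -/
lemma phase_to_solution (hUopen : IsOpen U)
    (hg : ∀ i j, ContDiffOn ℝ (⊤:ℕ∞) (fun x => g x i j) U)
    (hdet : ∀ x ∈ U, (g x).det ≠ 0) (hf : ContDiffOn ℝ (⊤:ℕ∞) f U)
    {y : ℝ → (Fin n → ℝ) × (Fin n → ℝ)} {J : Set ℝ} (hJ : IsOpen J)
    (hy : ∀ t ∈ J, HasDerivAt y (phaseF g f (y t)) t)
    (hyU : ∀ t ∈ J, (y t).1 ∈ U) :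
    IsSolutionOn g f U (fun u => (y u).1) J ∧
      ∀ t ∈ J, deriv (fun u => (y u).1) t = (y t).2 := by
  have hq' : ∀ t ∈ J, HasDerivAt (fun u => (y u).1) ((y t).2) t :=
    fun t ht => (hy t ht).fst'
  have hqd : EqOn (deriv fun u => (y u).1) (fun t => (y t).2) J :=
    fun t ht => (hq' t ht).deriv
  have hyc : ContinuousOn y J := fun t ht => ((hy t ht).continuousAt).continuousWithinAt
  have hmaps : MapsTo y J (U ×ˢ (univ : Set (Fin n → ℝ))) := fun t ht => ⟨hyU t ht, trivial⟩
  have hdy : EqOn (deriv y) (fun t => phaseF g f (y t)) J := fun t ht => (hy t ht).deriv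
  have hy1 : ContDiffOn ℝ 1 y J := by
    rw [show (1 : WithTop ℕ∞) = 0 + 1 by norm_num, contDiffOn_succ_iff_deriv_of_isOpen hJ]
    refine ⟨fun t ht => ((hy t ht).differentiableAt).differentiableWithinAt,
      fun h => by simp at h, ?_⟩
    rw [contDiffOn_zero]
    exact ContinuousOn.congr
      (((phaseF_contDiffOn hUopen hg hdet hf).continuousOn).comp hyc hmaps) hdy
  have hq2 : ContDiffOn ℝ 2 (fun u => (y u).1) J := by
    rw [show (2 : WithTop ℕ∞) = 1 + 1 by norm_num, contDiffOn_succ_iff_deriv_of_isOpen hJ]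
    refine ⟨fun t ht => ((hq' t ht).differentiableAt).differentiableWithinAt,
      fun h => by simp at h, ?_⟩
    exact ContDiffOn.congr (contDiff_snd.comp_contDiffOn hy1) hqd
  refine ⟨⟨hq2, hyU, ?_⟩, fun t ht => hqd ht⟩
  intro t ht
  have hdd : deriv (deriv (fun u => (y u).1)) t = (phaseF g f (y t)).2 := by
    have hev : deriv (fun u => (y u).1) =ᶠ[𝓝 t] fun u => (y u).2 := by
      filter_upwards [hJ.mem_nhds ht] with u hu using hqd hu
    rw [hev.deriv_eq]
    exact ((hy t ht).snd').deriv
  funext k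
  simp only [covAccel]
  rw [hdd, hqd ht]
  simp only [phaseF]
  ring
end F

section G1
variable {n : ℕ} {U : Set (Fin n → ℝ)} {g : (Fin n → ℝ) → Matrix (Fin n) (Fin n) ℝ}
  {f : (Fin n → ℝ) → ℝ} {γ : ℝ → Fin n → ℝ}

lemma exists_local_solution (hUopen : IsOpen U)
    (hg : ∀ i j, ContDiffOn ℝ (⊤:ℕ∞) (fun x => g x i j) U)
    (hdet : ∀ x ∈ U, (g x).det ≠ 0) (hf : ContDiffOn ℝ (⊤:ℕ∞) f U)
    {x₀ p₀ : Fin n → ℝ} (hx₀ : x₀ ∈ U) :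
    ∃ (q : ℝ → Fin n → ℝ) (J : Set ℝ), IsOpen J ∧ J.OrdConnected ∧ (0:ℝ) ∈ J ∧
      IsSolutionOn g f U q J ∧ q 0 = x₀ ∧ deriv q 0 = p₀ := by
  have hF := phaseF_contDiffAt hUopen hg hdet hf (z := (x₀, p₀)) hx₀
  obtain ⟨y, hy0, ε, hε, hy⟩ := hF.exists_forall_mem_closedBall_exists_eq_forall_mem_Ioo_hasDerivAt₀ 0
  have h0mem : (0:ℝ) ∈ Ioo (0-ε) (0+ε) := by constructor <;> [linarith; linarith]
  have hcont : ContinuousAt y 0 := (hy 0 h0mem).continuousAt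
  have hUnhds : U ×ˢ (univ : Set (Fin n → ℝ)) ∈ 𝓝 (y 0) := by
    rw [hy0]
    exact (hUopen.prod isOpen_univ).mem_nhds ⟨hx₀, trivial⟩
  have hUy : ∀ᶠ t in 𝓝 (0:ℝ), y t ∈ U ×ˢ (univ : Set (Fin n → ℝ)) := hcont hUnhds
  have hIoo : ∀ᶠ t in 𝓝 (0:ℝ), t ∈ Ioo (0-ε) (0+ε) :=
    Ioo_mem_nhds h0mem.1 h0mem.2
  obtain ⟨W, hWnhds, hW⟩ := eventually_iff_exists_mem.mp (hUy.and hIoo)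
  obtain ⟨δ, hδ, hball⟩ := Metric.mem_nhds_iff.mp hWnhds
  set J : Set ℝ := Metric.ball (0:ℝ) δ with hJ
  have hJW : J ⊆ W := hball
  have hJopen : IsOpen J := Metric.isOpen_ball
  have h0J : (0:ℝ) ∈ J := Metric.mem_ball_self hδ
  have hysol : ∀ t ∈ J, HasDerivAt y (phaseF g f (y t)) t :=
    fun t ht => hy t (hW t (hJW ht)).2
  have hyU : ∀ t ∈ J, (y t).1 ∈ U := fun t ht => (hW t (hJW ht)).1.1
  obtain ⟨hsol, hd⟩ := phase_to_solution hUopen hg hdet hf hJopen hysol hyU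
  refine ⟨fun u => (y u).1, J, hJopen, ?_, h0J, hsol, by show (y 0).1 = x₀; rw [hy0], ?_⟩
  · rw [hJ, Real.ball_eq_Ioo]; exact ordConnected_Ioo
  · rw [hd 0 h0J, hy0]

/-- key step for the forward direction -/
lemma forward_key (hUopen : IsOpen U)
    (hg : ∀ i j, ContDiffOn ℝ (⊤:ℕ∞) (fun x => g x i j) U)
    (hdet : ∀ x ∈ U, (g x).det ≠ 0) (hf : ContDiffOn ℝ (⊤:ℕ∞) f U)
    (hγsmooth : ContDiff ℝ (⊤:ℕ∞) γ) (hγU : ∀ s : ℝ, γ s ∈ U)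
    (hγinj : Function.Injective γ) (hγproper : IsProperMap γ)
    (hγunit : ∀ s : ℝ, deriv γ s ⬝ᵥ (g (γ s)) *ᵥ deriv γ s = 1)
    (hNM : IsStrictNormalMode g f U γ) (s₀ v : ℝ) :
    ∃ c : ℝ, gGrad g f (γ s₀) = c • deriv γ s₀ + v^2 • covAccel g γ s₀ := by
  classical
  obtain ⟨q, J, hJopen, hJord, h0J, hsol, hq0, hqd0⟩ :=
    exists_local_solution hUopen hg hdet hf (p₀ := v • deriv γ s₀) (hγU s₀)
  have hinit : (q 0, deriv q 0) ∈ TangentBundleOf γ := ⟨s₀, v, hq0, hqd0⟩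
  have hTC : ∀ t ∈ J, (q t, deriv q t) ∈ TangentBundleOf γ :=
    hNM J hJopen hJord q hsol 0 h0J hinit
  -- set up the local inverse of the i₀-th coordinate of γ
  obtain ⟨i₀, hi₀⟩ := Function.ne_iff.mp (deriv_ne_zero (g := g) hγunit s₀)
  have hi₀' : deriv γ s₀ i₀ ≠ 0 := by simpa using hi₀
  set ψ : ℝ → ℝ := fun s => γ s i₀ with hψdef
  have hψ : ContDiffAt ℝ 2 ψ s₀ := ((contDiff_pi.mp hγsmooth i₀).of_le
    (by
      rw [show ((2:WithTop ℕ∞)) = ((2:ℕ∞):WithTop ℕ∞) by rfl]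
      exact WithTop.coe_le_coe.mpr le_top)).contDiffAt
  have hγdiff : Differentiable ℝ γ := hγsmooth.differentiable (by simp)
  have hψd : HasDerivAt ψ (deriv γ s₀ i₀) s₀ := hasDerivAt_pi.mp ((hγdiff s₀).hasDerivAt) i₀
  set F' : ℝ ≃L[ℝ] ℝ := ContinuousLinearEquiv.unitsEquivAut ℝ (Units.mk0 _ hi₀') with hF'
  have hψF : HasFDerivAt ψ (F' : ℝ →L[ℝ] ℝ) s₀ := by
    have : (F' : ℝ →L[ℝ] ℝ) = ContinuousLinearMap.smulRight (1 : ℝ →L[ℝ] ℝ)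
        (deriv γ s₀ i₀) := by
      ext x
      simp [hF', ContinuousLinearEquiv.unitsEquivAut_apply, mul_comm]
    rw [this]
    exact hψd.hasFDerivAt
  have hn2 : (2 : WithTop ℕ∞) ≠ 0 := by norm_num
  set sinv : ℝ → ℝ := hψ.localInverse hψF hn2 with hsinvdef
  have hsinv : ContDiffAt ℝ 2 sinv (ψ s₀) := hψ.to_localInverse hψF hn2
  have hleft : ∀ᶠ x in 𝓝 s₀, sinv (ψ x) = x :=
    (hψ.hasStrictFDerivAt' hψF hn2).eventually_left_inverse
  have hsinv0 : sinv (ψ s₀) = s₀ := hleft.self_of_nhds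
  -- the reparametrization
  set S : ℝ → ℝ := fun t => sinv (q t i₀) with hSdef
  have hq0i : q 0 i₀ = ψ s₀ := by rw [hq0]
  have hqcd : ContDiffAt ℝ 2 q 0 := (hsol.1).contDiffAt (hJopen.mem_nhds h0J)
  have hS2 : ContDiffAt ℝ 2 S 0 := by
    have h1 : ContDiffAt ℝ 2 (fun t => q t i₀) 0 := contDiffAt_pi.mp hqcd i₀
    have h2 : ContDiffAt ℝ 2 sinv (q 0 i₀) := by rw [hq0i]; exact hsinv
    exact h2.comp 0 h1
  -- the solution stays on the curve: q t = γ (S t) near 0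
  have hqS : ∀ᶠ t in 𝓝 (0:ℝ), q t = γ (S t) := by
    have hTC' : ∀ t, ∃ s w : ℝ, t ∈ J → (q t = γ s ∧ deriv q t = w • deriv γ s) := by
      intro t
      by_cases ht : t ∈ J
      · obtain ⟨s, w, h1, h2⟩ := hTC t ht
        exact ⟨s, w, fun _ => ⟨h1, h2⟩⟩
      · exact ⟨s₀, 0, fun h => absurd h ht⟩
    choose σ wit hσ using hTC'
    have hemb : Topology.IsClosedEmbedding γ :=
      Topology.IsClosedEmbedding.of_continuous_injective_isClosedMap
        hγsmooth.continuous hγinj hγproper.isClosedMap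
    have hqcont : ContinuousAt q 0 := hqcd.continuousAt
    have hγσ : (fun t => γ (σ t)) =ᶠ[𝓝 (0:ℝ)] q := by
      filter_upwards [hJopen.mem_nhds h0J] with t ht using ((hσ t ht).1).symm
    have htend : Tendsto σ (𝓝 0) (𝓝 s₀) := by
      rw [hemb.isEmbedding.isInducing.tendsto_nhds_iff]
      have : Tendsto q (𝓝 0) (𝓝 (γ s₀)) := by rw [← hq0]; exact hqcont
      exact Tendsto.congr' hγσ.symm this
    have hev : ∀ᶠ t in 𝓝 (0:ℝ), sinv (ψ (σ t)) = σ t := htend.eventually hleft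
    filter_upwards [hev, hJopen.mem_nhds h0J] with t h1 h2
    have hqt : q t = γ (σ t) := (hσ t h2).1
    have : S t = σ t := by
      rw [hSdef]
      simp only
      rw [hqt]
      exact h1
    rw [this, hqt]
  -- compute the covariant acceleration via the chain rule
  obtain ⟨hSev, hSdd⟩ := c2_at_deriv hS2
  obtain ⟨hd0, hca⟩ := covAccel_comp g hγsmooth hSev hSdd
  have hS0 : S 0 = s₀ := by rw [hSdef]; simp only; rw [hq0i]; exact hsinv0
  have heqq : q =ᶠ[𝓝 (0:ℝ)] fun u => γ (S u) := hqS
  have hcov : covAccel g q 0 = covAccel g (fun u => γ (S u)) 0 := covAccel_congr g heqq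
  have hdq0 : deriv q 0 = deriv S 0 • deriv γ s₀ := by
    rw [heqq.deriv_eq, hd0, hS0]
  have hvS : deriv S 0 = v := by
    refine (smul_cancel (deriv_ne_zero (g := g) hγunit s₀) ?_)
    rw [← hdq0, hqd0]
  have heq0 : covAccel g q 0 = gGrad g f (q 0) := hsol.2.2 0 h0J
  refine ⟨deriv (deriv S) 0, ?_⟩
  rw [← hq0, ← heq0, hcov, hca, hS0, hvS]

end G1

section G2
variable {n : ℕ} {U : Set (Fin n → ℝ)} {g : (Fin n → ℝ) → Matrix (Fin n) (Fin n) ℝ}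
  {f : (Fin n → ℝ) → ℝ} {γ : ℝ → Fin n → ℝ}

lemma reverse_main (hUopen : IsOpen U)
    (hg : ∀ i j, ContDiffOn ℝ (⊤:ℕ∞) (fun x => g x i j) U)
    (hdet : ∀ x ∈ U, (g x).det ≠ 0) (hf : ContDiffOn ℝ (⊤:ℕ∞) f U)
    (hγsmooth : ContDiff ℝ (⊤:ℕ∞) γ) (hγU : ∀ s : ℝ, γ s ∈ U)
    (hγinj : Function.Injective γ) (hγproper : IsProperMap γ)
    (hγunit : ∀ s : ℝ, deriv γ s ⬝ᵥ (g (γ s)) *ᵥ deriv γ s = 1)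
    (hgeo : ∀ s, covAccel g γ s = 0)
    (hb : ∀ s, ∃ β : ℝ, gGrad g f (γ s) = β • deriv γ s) :
    IsStrictNormalMode g f U γ := by
  classical
  have hγdiff : Differentiable ℝ γ := hγsmooth.differentiable (by simp)
  have hγ' : ContDiff ℝ (⊤:ℕ∞) (deriv γ) := (contDiff_infty_iff_deriv.mp hγsmooth).2
  have hγ'diff : Differentiable ℝ (deriv γ) := hγ'.differentiable (by simp)
  -- the canonical tangential gradient coefficient
  set α : ℝ → ℝ := fun s => deriv γ s ⬝ᵥ (g (γ s)) *ᵥ gGrad g f (γ s) with hαdef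
  have hαa : ∀ s, gGrad g f (γ s) = α s • deriv γ s := by
    intro s
    obtain ⟨β, hβ⟩ := hb s
    have : α s = β := by
      rw [hαdef]
      simp only
      rw [hβ, Matrix.mulVec_smul, dotProduct_smul, hγunit s]
      simp
    rw [hβ, this]
  have hαsmooth : ContDiff ℝ 1 α := by
    have hexp : α = fun s => ∑ i, ∑ j, g (γ s) i j * deriv γ s i * gGrad g f (γ s) j := by
      funext s
      rw [hαdef]
      exact dot_mulVec_expand _ _ _
    rw [hexp]
    apply ContDiff.sum; intro i _
    apply ContDiff.sum; intro j _
    have h1 : ContDiff ℝ (⊤:ℕ∞) (fun s => g (γ s) i j) :=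
      (hg i j).comp_contDiff hγsmooth hγU
    have h2 : ContDiff ℝ (⊤:ℕ∞) (fun s => deriv γ s i) := contDiff_pi.mp hγ' i
    have h3 : ContDiff ℝ (⊤:ℕ∞) (fun s => gGrad g f (γ s) j) :=
      (contDiffOn_gGrad hUopen hg hdet hf j).comp_contDiff hγsmooth hγU
    exact (((h1.mul h2).mul h3).of_le (by exact_mod_cast le_top))
  -- the 1-D phase field
  set G : ℝ × ℝ → ℝ × ℝ := fun z => (z.2, α z.1) with hGdef
  have hGsmooth : ContDiff ℝ 1 G := contDiff_snd.prodMk (hαsmooth.comp contDiff_fst)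
  -- main invariance argument
  intro I hIopen hIord q hsol t₀ ht₀ hinit t ht
  set A : Set ℝ := {u | u ∈ I ∧ (q u, deriv q u) ∈ TangentBundleOf γ} with hA
  have hyqode : ∀ u ∈ I, HasDerivAt (fun r => (q r, deriv q r))
      (phaseF g f (q u, deriv q u)) u :=
    fun u hu => solution_phase hIopen hsol.1 hsol.2.2 hu
  -- openness of A
  have hopen : IsOpen A := by
    rw [isOpen_iff_mem_nhds]
    rintro t₁ ⟨ht₁, s₁, v₁, hx1, hp1⟩
    obtain ⟨z, hz0, ε, hε, hz⟩ :=
      (hGsmooth.contDiffAt (x := (s₁, v₁))).exists_forall_mem_closedBall_exists_eq_forall_mem_Ioo_hasDerivAt₀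
        t₁
    set σ : ℝ → ℝ := fun u => (z u).1 with hσdef
    have hσd : ∀ u ∈ Ioo (t₁-ε) (t₁+ε), HasDerivAt σ ((z u).2) u :=
      fun u hu => (hz u hu).fst'
    have hσd2 : ∀ u ∈ Ioo (t₁-ε) (t₁+ε), HasDerivAt (fun r => (z r).2) (α (σ u)) u :=
      fun u hu => (hz u hu).snd'
    set Y : ℝ → (Fin n → ℝ) × (Fin n → ℝ) :=
      fun u => (γ (σ u), (z u).2 • deriv γ (σ u)) with hYdef
    have hYode : ∀ u ∈ Ioo (t₁-ε) (t₁+ε), HasDerivAt Y (phaseF g f (Y u)) u := by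
      intro u hu
      have h1 : HasDerivAt (fun r => γ (σ r)) ((z u).2 • deriv γ (σ u)) u :=
        ((hγdiff (σ u)).hasDerivAt).scomp u (hσd u hu)
      have h2 : HasDerivAt (fun r => (z r).2 • deriv γ (σ r))
          ((z u).2 • ((z u).2 • deriv (deriv γ) (σ u)) + α (σ u) • deriv γ (σ u)) u := by
        have hi : HasDerivAt (fun r => deriv γ (σ r)) ((z u).2 • deriv (deriv γ) (σ u)) u :=
          ((hγ'diff (σ u)).hasDerivAt).scomp u (hσd u hu)
        exact (hσd2 u hu).smul hi
      have hval : (z u).2 • ((z u).2 • deriv (deriv γ) (σ u)) + α (σ u) • deriv γ (σ u)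
          = (phaseF g f (Y u)).2 := by
        funext k
        simp only [phaseF, hYdef, Pi.add_apply, Pi.smul_apply, smul_eq_mul]
        have hge := congrFun (hgeo (σ u)) k
        simp only [covAccel, Pi.zero_apply] at hge
        have hgr := congrFun (hαa (σ u)) k
        simp only [Pi.smul_apply, smul_eq_mul] at hgr
        rw [hgr, sum_sum_scale (fun i j => christoffel g k i j (γ (σ u)))
          ((z u).2) (deriv γ (σ u))]
        linear_combination ((z u).2)^2 * hge
      rw [hval] at h2
      exact h1.prodMk h2
    have ht₁mem : t₁ ∈ Ioo (t₁-ε) (t₁+ε) := by constructor <;> linarith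
    have hYt₁ : Y t₁ = (q t₁, deriv q t₁) := by
      rw [hYdef]
      simp only [hσdef, hz0]
      rw [← hx1, ← hp1]
    obtain ⟨K, sset, hsmem, hlip⟩ :=
      (phaseF_contDiffAt hUopen hg hdet hf
        (z := (q t₁, deriv q t₁)) (hsol.2.1 t₁ ht₁)).exists_lipschitzOnWith
    have hyqcont : ContinuousAt (fun r => (q r, deriv q r)) t₁ :=
      (hyqode t₁ ht₁).continuousAt
    have hYcont : ContinuousAt Y t₁ := (hYode t₁ ht₁mem).continuousAt
    have hev1 : ∀ᶠ u in 𝓝 t₁, HasDerivAt (fun r => (q r, deriv q r))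
        (phaseF g f (q u, deriv q u)) u ∧ (q u, deriv q u) ∈ sset := by
      have hmem : ∀ᶠ u in 𝓝 t₁, (q u, deriv q u) ∈ sset := hyqcont hsmem
      filter_upwards [hIopen.mem_nhds ht₁, hmem] with u hu hmu
      exact ⟨hyqode u hu, hmu⟩
    have hev2 : ∀ᶠ u in 𝓝 t₁, HasDerivAt Y (phaseF g f (Y u)) u ∧ Y u ∈ sset := by
      have hsmem' : sset ∈ 𝓝 (Y t₁) := by rw [hYt₁]; exact hsmem
      have hmem : ∀ᶠ u in 𝓝 t₁, Y u ∈ sset := hYcont hsmem'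
      filter_upwards [Ioo_mem_nhds ht₁mem.1 ht₁mem.2, hmem] with u hu hmu
      exact ⟨hYode u hu, hmu⟩
    have huniq : (fun r => (q r, deriv q r)) =ᶠ[𝓝 t₁] Y :=
      ODE_solution_unique_of_eventually (v := fun _ => phaseF g f)
        (s := fun _ => sset) (Eventually.of_forall fun _ => hlip) hev1 hev2 hYt₁.symm
    filter_upwards [huniq, hIopen.mem_nhds ht₁] with u hu huI
    refine ⟨huI, σ u, (z u).2, ?_, ?_⟩
    · exact congrArg Prod.fst hu
    · exact congrArg Prod.snd hu
  -- closedness within I, and connectedness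
  have hIpre : IsPreconnected I := hIord.isPreconnected
  haveI : PreconnectedSpace I := Subtype.preconnectedSpace hIpre
  set K : Set I := {x : I | (↑x : ℝ) ∈ A} with hK
  have hKopen : IsOpen K := hopen.preimage continuous_subtype_val
  have hKclosed : IsClosed K := by
    have hc : Continuous (fun x : I => (q (↑x : ℝ), deriv q (↑x : ℝ))) := by
      rw [continuous_iff_continuousAt]
      intro x
      exact ((hyqode (↑x) x.2).continuousAt).comp continuousAt_subtype_val
    have heq : K = (fun x : I => (q (↑x : ℝ), deriv q (↑x : ℝ))) ⁻¹' TangentBundleOf γ := by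
      ext x
      simp only [hK, hA, mem_setOf_eq, mem_preimage]
      exact ⟨fun h => h.2, fun h => ⟨x.2, h⟩⟩
    rw [heq]
    exact (tangentBundle_closed hγsmooth hγinj hγproper hγunit).preimage hc
  have hKuniv : K = univ :=
    (IsClopen.eq_univ ⟨hKclosed, hKopen⟩ (⟨⟨t₀, ht₀⟩, ht₀, hinit⟩ : K.Nonempty))
  have : (⟨t, ht⟩ : I) ∈ K := hKuniv ▸ mem_univ _
  exact this.2
end G2

/-- **Theorem 1.** A smooth, injective, proper, `g`-unit-speed curve `γ : ℝ → U` with image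
`C = γ(ℝ)` is a strict normal mode of the dynamics `Dq̇ = ∇f(q)` if and only if
(a) `γ` is a geodesic and (b) the gradient `∇f(γ(s))` lies in the span of `γ̇(s)` for all `s`. -/
theorem strict_normal_mode_iff_geodesic_and_tangent_gradient
    {n : ℕ} (hn : 1 ≤ n) (U : Set (Fin n → ℝ)) (hUopen : IsOpen U)
    (g : (Fin n → ℝ) → Matrix (Fin n) (Fin n) ℝ)
    (hg : ∀ i j, ContDiffOn ℝ (⊤ : ℕ∞) (fun x => g x i j) U)
    (hgsymm : ∀ x ∈ U, (g x).IsSymm) (hgpos : ∀ x ∈ U, (g x).PosDef)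
    (f : (Fin n → ℝ) → ℝ) (hf : ContDiffOn ℝ (⊤ : ℕ∞) f U)
    (γ : ℝ → Fin n → ℝ) (hγsmooth : ContDiff ℝ (⊤ : ℕ∞) γ) (hγU : ∀ s : ℝ, γ s ∈ U)
    (hγinj : Function.Injective γ) (hγproper : IsProperMap γ)
    (hγunit : ∀ s : ℝ, deriv γ s ⬝ᵥ (g (γ s)) *ᵥ deriv γ s = 1) :
    IsStrictNormalMode g f U γ ↔
      (∀ s : ℝ, covAccel g γ s = 0) ∧
      (∀ s : ℝ, ∃ α : ℝ, gGrad g f (γ s) = α • deriv γ s) := by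
  have hdet : ∀ x ∈ U, (g x).det ≠ 0 := fun x hx => (hgpos x hx).det_pos.ne'
  have hdetU : ∀ x ∈ U, IsUnit (g x).det := fun x hx => (hdet x hx).isUnit
  constructor
  · intro hNM
    have hb : ∀ s : ℝ, ∃ α : ℝ, gGrad g f (γ s) = α • deriv γ s := by
      intro s
      obtain ⟨c, hc⟩ := forward_key hUopen hg hdet hf hγsmooth hγU hγinj hγproper hγunit hNM s 0
      refine ⟨c, ?_⟩
      simpa using hc
    refine ⟨?_, hb⟩
    intro s
    obtain ⟨c, hc⟩ := forward_key hUopen hg hdet hf hγsmooth hγU hγinj hγproper hγunit hNM s 1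
    obtain ⟨α, hα⟩ := hb s
    have hA : covAccel g γ s = (α - c) • deriv γ s := by
      have h1 : ((1:ℝ))^2 • covAccel g γ s = covAccel g γ s := by simp
      rw [h1, hα] at hc
      -- hc : α • w = c • w + covAccel
      rw [sub_smul]
      rw [hc]
      abel
    have hval := covAccel_dot_self hUopen hg hgsymm hdetU hγsmooth hγU hγunit s
    rw [hA, smul_dotProduct, hγunit s] at hval
    have : α - c = 0 := by simpa using hval
    rw [hA, this, zero_smul]
  · rintro ⟨hgeo, hb⟩
    exact reverse_main hUopen hg hdet hf hγsmooth hγU hγinj hγproper hγunit hgeo hb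
end

section
/- Let γ : ℝ → U be a smooth g-unit-speed geodesic and suppose there is a smooth function α : ℝ → ℝ such that ∇f(γ(s)) = α(s)·γ̇(s) for all s ∈ ℝ. Then for every s₀, v₀ ∈ ℝ there exist ε > 0 and a C² function σ : (−ε, ε) → ℝ with σ(0) = s₀ and σ̇(0) = v₀ such that the curve q := γ ∘ σ is a solution of the dynamics Dq̇ = ∇f(q). In particular, through every point of the tangent bundle of the curve there passes a solution of the dynamics that remains on the curve. -/
open Matrix

/-- Along a `g`-unit-speed geodesic `γ` whose tangential potential gradient is
`∇f(γ(s)) = α(s)·γ̇(s)`, through every point `(s₀, v₀)` of the tangent bundle of the curve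
there passes a local `C²` solution `q = γ ∘ σ` of the dynamics `Dq̇ = ∇f(q)`
remaining on the curve. -/
theorem exists_local_solution_on_strict_mode
    {n : ℕ} (hn : 1 ≤ n) (U : Set (Fin n → ℝ)) (hUopen : IsOpen U)
    (g : (Fin n → ℝ) → Matrix (Fin n) (Fin n) ℝ)
    (hg : ∀ i j, ContDiffOn ℝ (⊤ : ℕ∞) (fun x => g x i j) U)
    (hgsymm : ∀ x ∈ U, (g x).IsSymm) (hgpos : ∀ x ∈ U, (g x).PosDef)
    (f : (Fin n → ℝ) → ℝ) (hf : ContDiffOn ℝ (⊤ : ℕ∞) f U)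
    (γ : ℝ → Fin n → ℝ) (hγsmooth : ContDiff ℝ (⊤ : ℕ∞) γ) (hγU : ∀ s : ℝ, γ s ∈ U)
    (hγunit : ∀ s : ℝ, deriv γ s ⬝ᵥ (g (γ s)) *ᵥ deriv γ s = 1)
    (hγgeo : ∀ s : ℝ, covAccel g γ s = 0)
    (α : ℝ → ℝ) (hα : ContDiff ℝ (⊤ : ℕ∞) α)
    (hgrad : ∀ s : ℝ, gGrad g f (γ s) = α s • deriv γ s) :
    ∀ s₀ v₀ : ℝ, ∃ ε > (0 : ℝ), ∃ σ : ℝ → ℝ,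
      ContDiffOn ℝ 2 σ (Set.Ioo (-ε) ε) ∧ σ 0 = s₀ ∧ deriv σ 0 = v₀ ∧
      ∀ t ∈ Set.Ioo (-ε) ε,
        covAccel g (fun τ => γ (σ τ)) t = gGrad g f (γ (σ t)) := by
  intro s₀ v₀
  have hα1 : ContDiff ℝ 1 α := hα.of_le (by exact_mod_cast le_top)
  have hV : ContDiff ℝ 1 (fun p : ℝ × ℝ => (p.2, α p.1)) :=
    contDiff_snd.prodMk (hα1.comp contDiff_fst)
  obtain ⟨F, hF0, ε, hε, hFaux⟩ :=
    (hV.contDiffAt (x := (s₀, v₀))).exists_forall_mem_closedBall_exists_eq_forall_mem_Ioo_hasDerivAt₀ 0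
  have hF : ∀ t ∈ Set.Ioo (-ε) ε, HasDerivAt F ((F t).2, α ((F t).1)) t := by
    simpa using hFaux
  set σ : ℝ → ℝ := fun t => (F t).1 with hσdef
  have hσ' : ∀ t ∈ Set.Ioo (-ε) ε, HasDerivAt σ ((F t).2) t := by
    intro t ht
    have := ((ContinuousLinearMap.fst ℝ ℝ ℝ).hasFDerivAt.comp t
      (hF t ht).hasFDerivAt).hasDerivAt
    simpa [Function.comp_def, hσdef] using this
  have hF2' : ∀ t ∈ Set.Ioo (-ε) ε, HasDerivAt (fun τ => (F τ).2) (α (σ t)) t := by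
    intro t ht
    have := ((ContinuousLinearMap.snd ℝ ℝ ℝ).hasFDerivAt.comp t
      (hF t ht).hasFDerivAt).hasDerivAt
    simpa [Function.comp_def, hσdef] using this
  have hopen : IsOpen (Set.Ioo (-ε) ε) := isOpen_Ioo
  have h0mem : (0 : ℝ) ∈ Set.Ioo (-ε) ε := ⟨by linarith, hε⟩
  -- derivatives of γ
  have hγdiff : Differentiable ℝ γ := hγsmooth.differentiable (by simp)
  have hγ'smooth : ContDiff ℝ (⊤ : ℕ∞) (deriv γ) := by
    have := (contDiff_infty_iff_deriv.mp (by exact_mod_cast hγsmooth)).2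
    exact_mod_cast this
  have hγ'diff : Differentiable ℝ (deriv γ) :=
    hγ'smooth.differentiable (by simp)
  -- regularity of σ
  have hσdiffOn : DifferentiableOn ℝ σ (Set.Ioo (-ε) ε) := fun τ hτ =>
    ((hσ' τ hτ).differentiableAt).differentiableWithinAt
  have hderiv_eq : Set.EqOn (deriv σ) (fun τ => (F τ).2) (Set.Ioo (-ε) ε) :=
    fun τ hτ => (hσ' τ hτ).deriv
  have hF2cont : ContDiffOn ℝ 1 (fun τ => (F τ).2) (Set.Ioo (-ε) ε) := by
    rw [show (1 : WithTop ℕ∞) = 0 + 1 by norm_num,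
      contDiffOn_succ_iff_deriv_of_isOpen hopen]
    refine ⟨fun τ hτ => ((hF2' τ hτ).differentiableAt).differentiableWithinAt, by simp, ?_⟩
    rw [contDiffOn_zero]
    have : ContinuousOn (fun τ => α (σ τ)) (Set.Ioo (-ε) ε) :=
      hα.continuous.comp_continuousOn hσdiffOn.continuousOn
    exact this.congr fun τ hτ => (hF2' τ hτ).deriv
  have hσC2 : ContDiffOn ℝ 2 σ (Set.Ioo (-ε) ε) := by
    rw [show (2 : WithTop ℕ∞) = 1 + 1 by norm_num,
      contDiffOn_succ_iff_deriv_of_isOpen hopen]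
    exact ⟨hσdiffOn, by simp, hF2cont.congr hderiv_eq⟩
  refine ⟨ε, hε, σ, hσC2, by simp [hσdef, hF0], ?_, ?_⟩
  · have := (hσ' 0 h0mem).deriv
    rw [this, hF0]
  · intro t ht
    set q : ℝ → Fin n → ℝ := fun τ => γ (σ τ) with hq
    have h1 : ∀ τ ∈ Set.Ioo (-ε) ε, HasDerivAt q ((F τ).2 • deriv γ (σ τ)) τ := by
      intro τ hτ
      exact ((hγdiff (σ τ)).hasDerivAt).scomp τ (hσ' τ hτ)
    have hq't : deriv q t = (F t).2 • deriv γ (σ t) := (h1 t ht).deriv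
    have hqev : deriv q =ᶠ[nhds t] fun τ => (F τ).2 • deriv γ (σ τ) :=
      Filter.eventuallyEq_of_mem (hopen.mem_nhds ht) fun τ hτ => (h1 τ hτ).deriv
    have hw : HasDerivAt (fun τ => (F τ).2 • deriv γ (σ τ))
        (α (σ t) • deriv γ (σ t) + (F t).2 • ((F t).2 • deriv (deriv γ) (σ t))) t :=
      by simpa [Function.comp_def, add_comm, Pi.smul_def'] using
        (hF2' t ht).smul (((hγ'diff (σ t)).hasDerivAt).scomp t (hσ' t ht))
    have hq'' : deriv (deriv q) t
        = α (σ t) • deriv γ (σ t) + (F t).2 • ((F t).2 • deriv (deriv γ) (σ t)) := by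
      rw [hqev.deriv_eq]; exact hw.deriv
    have hgeo : ∀ k, deriv (deriv γ) (σ t) k
        = -∑ i, ∑ j, christoffel g k i j (γ (σ t)) * deriv γ (σ t) i * deriv γ (σ t) j := by
      intro k
      have := congrFun (hγgeo (σ t)) k
      simp only [covAccel, Pi.zero_apply] at this
      linarith
    funext k
    have hqt : q t = γ (σ t) := rfl
    simp only [covAccel, hgrad (σ t), hq'', hq't, hqt, Pi.add_apply, Pi.smul_apply,
      smul_eq_mul, hgeo k]
    have hsum : ∑ i, ∑ j, christoffel g k i j (γ (σ t)) * ((F t).2 * deriv γ (σ t) i)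
          * ((F t).2 * deriv γ (σ t) j)
        = (F t).2 * ((F t).2 * ∑ i, ∑ j, christoffel g k i j (γ (σ t)) * deriv γ (σ t) i
          * deriv γ (σ t) j) := by
      simp_rw [Finset.mul_sum]
      exact Finset.sum_congr rfl fun i _ => Finset.sum_congr rfl fun j _ => by ring
    rw [hsum]; ring
end

section
/- Let γ : ℝ → U be a smooth g-unit-speed geodesic and suppose there is a smooth function α : ℝ → ℝ such that ∇f(γ(s)) = α(s)·γ̇(s) for all s ∈ ℝ. Let I ⊆ ℝ be an open interval and σ : I → ℝ a C² function. Then q := γ ∘ σ is a solution of the dynamics Dq̇ = ∇f(q) on I if and only if σ̈(t) = α(σ(t)) for all t ∈ I. (Motions on the mode are governed by a single second-order ODE.) -/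
open Matrix

/-- Along a `g`-unit-speed geodesic `γ` whose tangential potential gradient is
`∇f(γ(s)) = α(s)·γ̇(s)`, a reparametrized curve `q = γ ∘ σ` (with `σ` a `C²` function on an
open interval `I`) solves the dynamics `Dq̇ = ∇f(q)` on `I` if and only if
`σ̈(t) = α(σ(t))` on `I`: motions on the mode are governed by a single second-order ODE. -/
theorem solution_on_mode_iff_scalar_ode
    {n : ℕ} (hn : 1 ≤ n) (U : Set (Fin n → ℝ)) (hUopen : IsOpen U)
    (g : (Fin n → ℝ) → Matrix (Fin n) (Fin n) ℝ)
    (hg : ∀ i j, ContDiffOn ℝ (⊤ : ℕ∞) (fun x => g x i j) U)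
    (hgsymm : ∀ x ∈ U, (g x).IsSymm) (hgpos : ∀ x ∈ U, (g x).PosDef)
    (f : (Fin n → ℝ) → ℝ) (hf : ContDiffOn ℝ (⊤ : ℕ∞) f U)
    (γ : ℝ → Fin n → ℝ) (hγsmooth : ContDiff ℝ (⊤ : ℕ∞) γ) (hγU : ∀ s : ℝ, γ s ∈ U)
    (hγunit : ∀ s : ℝ, deriv γ s ⬝ᵥ (g (γ s)) *ᵥ deriv γ s = 1)
    (hγgeo : ∀ s : ℝ, covAccel g γ s = 0)
    (α : ℝ → ℝ) (hα : ContDiff ℝ (⊤ : ℕ∞) α)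
    (hgrad : ∀ s : ℝ, gGrad g f (γ s) = α s • deriv γ s)
    (I : Set ℝ) (hIopen : IsOpen I) (hIconn : I.OrdConnected)
    (σ : ℝ → ℝ) (hσ : ContDiffOn ℝ 2 σ I) :
    (∀ t ∈ I, covAccel g (fun τ => γ (σ τ)) t = gGrad g f (γ (σ t))) ↔
      (∀ t ∈ I, deriv (deriv σ) t = α (σ t)) := by

  have hγdiff : Differentiable ℝ γ := hγsmooth.differentiable (by simp)
  have hγ' : ContDiff ℝ (⊤ : ℕ∞) (deriv γ) := (contDiff_infty_iff_deriv.mp hγsmooth).2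
  have hγ'diff : Differentiable ℝ (deriv γ) := hγ'.differentiable (by simp)
  have hσ1 : ContDiffOn ℝ 1 (deriv σ) I := hσ.deriv_of_isOpen hIopen (by norm_num)
  have hσdiffI : ∀ s ∈ I, HasDerivAt σ (deriv σ s) s := fun s hs =>
    ((hσ.contDiffAt (hIopen.mem_nhds hs)).differentiableAt (by norm_num)).hasDerivAt
  have hvne : ∀ s : ℝ, deriv γ s ≠ 0 := by
    intro s h
    have h1 := hγunit s
    rw [h] at h1
    simp [zero_dotProduct] at h1
  have key : ∀ t ∈ I, covAccel g (fun τ => γ (σ τ)) t = deriv (deriv σ) t • deriv γ (σ t) := by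
    intro t ht
    have hq' : ∀ s ∈ I, HasDerivAt (fun τ => γ (σ τ)) (deriv σ s • deriv γ (σ s)) s := fun s hs =>
      (hγdiff (σ s)).hasDerivAt.scomp s (hσdiffI s hs)
    have hEq : (deriv fun τ => γ (σ τ)) =ᶠ[nhds t] fun s => deriv σ s • deriv γ (σ s) := by
      filter_upwards [hIopen.mem_nhds ht] with s hs using (hq' s hs).deriv
    have hσ'd : HasDerivAt (deriv σ) (deriv (deriv σ) t) t :=
      ((hσ1.differentiableOn (by norm_num)).differentiableAt (hIopen.mem_nhds ht)).hasDerivAt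
    have hinner : HasDerivAt (fun s => deriv γ (σ s)) (deriv σ t • deriv (deriv γ) (σ t)) t :=
      (hγ'diff (σ t)).hasDerivAt.scomp t (hσdiffI t ht)
    have h2 : HasDerivAt (fun s => deriv σ s • deriv γ (σ s))
        (deriv σ t • (deriv σ t • deriv (deriv γ) (σ t)) + deriv (deriv σ) t • deriv γ (σ t)) t :=
      hσ'd.smul hinner
    have hq'' : deriv (deriv fun τ => γ (σ τ)) t
        = deriv σ t • (deriv σ t • deriv (deriv γ) (σ t)) + deriv (deriv σ) t • deriv γ (σ t) := by
      rw [hEq.deriv_eq]; exact h2.deriv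
    have hq1 : deriv (fun τ => γ (σ τ)) t = deriv σ t • deriv γ (σ t) := (hq' t ht).deriv
    funext k
    have hgeo := congrFun (hγgeo (σ t)) k
    simp only [covAccel, Pi.zero_apply] at hgeo ⊢
    rw [hq'', hq1]
    simp only [Pi.add_apply, Pi.smul_apply, smul_eq_mul]
    have hsum : ∑ i, ∑ j, christoffel g k i j (γ (σ t)) * (deriv σ t * deriv γ (σ t) i)
        * (deriv σ t * deriv γ (σ t) j)
        = deriv σ t * (deriv σ t *
          ∑ i, ∑ j, christoffel g k i j (γ (σ t)) * deriv γ (σ t) i * deriv γ (σ t) j) := by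
      simp only [Finset.mul_sum]
      refine Finset.sum_congr rfl fun i _ => Finset.sum_congr rfl fun j _ => by ring
    rw [hsum]
    have hS : ∑ i, ∑ j, christoffel g k i j (γ (σ t)) * deriv γ (σ t) i * deriv γ (σ t) j
        = - deriv (deriv γ) (σ t) k := by linarith
    rw [hS]; ring
  constructor
  · intro h t ht
    have heq := h t ht
    rw [key t ht, hgrad (σ t)] at heq
    have h0 : (deriv (deriv σ) t - α (σ t)) • deriv γ (σ t) = 0 := by
      rw [sub_smul, heq, sub_self]
    rcases smul_eq_zero.mp h0 with h' | h'
    · linarith [sub_eq_zero.mp h']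
    · exact absurd h' (hvne (σ t))
  · intro h t ht
    rw [key t ht, hgrad (σ t), h t ht]
end
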